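/- Let R_1,...,R_d be independent random variables with each R_i ∈ [0, M] almost surely, and suppose E[∑_{i=1}^d R_i] ≥ c·M for a constant 0 < c ≤ 1. Then Pr[∑_{i=1}^d R_i ≥ (c²/100)·M] ≥ min(1/100, 1 − (1−(99c/100)²)/(1 − c²/100)). -/

import Mathlib

open MeasureTheory

/-- If R_1,…,R_d are independent with 0 ≤ R_i ≤ M a.s. and
E[∑ R_i] ≥ c·M for some c ∈ (0,1], then
Pr[∑ R_i ≥ (c²/100)·M] ≥ min(1/100, 1 − (1−(99c/100)²)/(1 − c²/100)). -/
private lemma anticoncentration_endgame (M c u t p : ℝ) (hM : 0 < M) (hc : 0 < c)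
    (hc' : c ≤ 1) (hcu : c * M ≤ u) (hu0 : 0 < u) (htdef : t = c ^ 2 / 100 * M)
    (hp0 : 0 ≤ p) (hp' : (u - t) ^ 2 ≤ (M * u + u ^ 2) * p) :
    min (1 / 100) (1 - (1 - (99 * c / 100) ^ 2) / (1 - c ^ 2 / 100)) ≤ p := by
  have ht2 : t ≤ c * u / 100 := by
    rw [htdef]; nlinarith [mul_le_mul_of_nonneg_left hcu hc.le]
  have hut : t ≤ u / 100 := by
    linarith [ht2, mul_nonneg (sub_nonneg.2 hc') hu0.le]
  by_cases hcc : (1 : ℝ) / 49 ≤ c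
  · refine le_trans (min_le_left _ _) ?_
    have hMu : M ≤ 49 * u := by
      have := mul_le_mul_of_nonneg_right hcc hM.le
      linarith [hcu]
    have e1 : (99 / 100 * u) ^ 2 ≤ (u - t) ^ 2 :=
      pow_le_pow_left₀ (by linarith) (by linarith) 2
    have e2 : (M * u + u ^ 2) * p ≤ 50 * u ^ 2 * p := by
      refine mul_le_mul_of_nonneg_right ?_ hp0
      linarith [mul_le_mul_of_nonneg_right hMu hu0.le]
    have e3 : (99 / 100 * u) ^ 2 ≤ 50 * u ^ 2 * p := le_trans e1 (le_trans hp' e2)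
    have e4 : u ^ 2 * (9801 / 10000) ≤ u ^ 2 * (50 * p) := by linarith [e3]
    have e5 : (9801 : ℝ) / 10000 ≤ 50 * p := (mul_le_mul_iff_right₀ (pow_pos hu0 2)).mp e4
    linarith
  · push_neg at hcc
    refine le_trans (min_le_right _ _) ?_
    have h1b : (0 : ℝ) < 1 - c ^ 2 / 100 := by nlinarith [hc, hc', sq_nonneg (1 - c)]
    rw [sub_le_iff_le_add, ← sub_le_iff_le_add', le_div_iff₀ h1b]
    have hMu2 : c * M * u ≤ u * u := by
      have := mul_le_mul_of_nonneg_right hcu hu0.le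
      linarith
    have hplow : c * (1 - c / 100) ^ 2 ≤ p * (1 + c) := by
      have hb1 : 0 ≤ u - c * u / 100 := by
        have h0 : 0 ≤ (1 - c) * u := mul_nonneg (by linarith) hu0.le
        nlinarith [mul_nonneg hc.le hu0.le]
      have h2 : (u - c * u / 100) ^ 2 ≤ (u - t) ^ 2 := pow_le_pow_left₀ hb1 (by linarith) 2
      have h3 : c * (M * u + u ^ 2) ≤ u * u + c * u ^ 2 := by linarith [hMu2]
      have h4 : c * ((u - c * u / 100) ^ 2) ≤ (u * u + c * u ^ 2) * p := by
        calc c * ((u - c * u / 100) ^ 2) ≤ c * ((M * u + u ^ 2) * p) :=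
              mul_le_mul_of_nonneg_left (le_trans h2 hp') hc.le
          _ = c * (M * u + u ^ 2) * p := by ring
          _ ≤ (u * u + c * u ^ 2) * p := mul_le_mul_of_nonneg_right h3 hp0
      have h4' : u ^ 2 * (c * (1 - c / 100) ^ 2) ≤ u ^ 2 * ((1 + c) * p) := by nlinarith [h4]
      have := (mul_le_mul_iff_right₀ (pow_pos hu0 2)).mp h4'
      linarith
    have hcpoly : ((99 * c / 100) ^ 2 - c ^ 2 / 100) * (1 + c)
        ≤ (c * (1 - c / 100) ^ 2) * (1 - c ^ 2 / 100) := by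
      nlinarith [hc, hcc, sq_nonneg c, mul_pos hc hc,
        mul_le_mul_of_nonneg_right hcc.le (sq_nonneg c), mul_pos (mul_pos hc hc) hc]
    have e1 : (c * (1 - c / 100) ^ 2) * (1 - c ^ 2 / 100)
        ≤ (p * (1 + c)) * (1 - c ^ 2 / 100) := mul_le_mul_of_nonneg_right hplow h1b.le
    have e2 : ((99 * c / 100) ^ 2 - c ^ 2 / 100) * (1 + c)
        ≤ (p * (1 - c ^ 2 / 100)) * (1 + c) := by nlinarith [hcpoly, e1]
    have e3 : (99 * c / 100) ^ 2 - c ^ 2 / 100 ≤ p * (1 - c ^ 2 / 100) :=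
      le_of_mul_le_mul_right e2 (by linarith)
    linarith [e3]

theorem independent_sum_anticoncentration
    {Ω : Type*} [MeasurableSpace Ω] (μ : Measure Ω) [IsProbabilityMeasure μ]
    (d : ℕ) (R : Fin d → Ω → ℝ)
    (hmeas : ∀ i, Measurable (R i))
    (hindep : ProbabilityTheory.iIndepFun R μ)
    (M c : ℝ) (hM : 0 < M) (hc : 0 < c) (hc' : c ≤ 1)
    (hbdd : ∀ i, ∀ᵐ ω ∂μ, R i ω ∈ Set.Icc 0 M)
    (hE : c * M ≤ ∫ ω, ∑ i, R i ω ∂μ) :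
    min (1 / 100) (1 - (1 - (99 * c / 100) ^ 2) / (1 - c ^ 2 / 100))
      ≤ (μ {ω | (c ^ 2 / 100) * M ≤ ∑ i, R i ω}).toReal := by
  classical
  set F : Ω → ℝ := ∑ i, R i with hFdef
  have hFapp : ∀ ω, F ω = ∑ i, R i ω := fun ω => by simp [hFdef]
  have hFmeas : Measurable F := by
    have : Measurable fun ω => ∑ i, R i ω := Finset.measurable_sum _ (fun i _ => hmeas i)
    simpa [funext hFapp] using this
  -- a.e. bounds
  have hbdd' : ∀ᵐ ω ∂μ, ∀ i, R i ω ∈ Set.Icc 0 M := ae_all_iff.2 hbdd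
  have hFbd : ∀ᵐ ω ∂μ, 0 ≤ F ω ∧ F ω ≤ d * M := by
    filter_upwards [hbdd'] with ω hω
    have h1 : 0 ≤ ∑ i, R i ω := Finset.sum_nonneg fun i _ => (hω i).1
    have h2 : ∑ i, R i ω ≤ ∑ _i : Fin d, M := Finset.sum_le_sum fun i _ => (hω i).2
    simp only [Finset.sum_const, Finset.card_univ, Fintype.card_fin, nsmul_eq_mul] at h2
    exact ⟨by rw [hFapp]; exact h1, by rw [hFapp]; exact h2⟩
  -- Memℒp facts
  have hR2 : ∀ i, MemLp (R i) 2 μ := by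
    intro i
    refine (memLp_top_of_bound (hmeas i).aestronglyMeasurable M ?_).mono_exponent le_top
    filter_upwards [hbdd i] with ω hω
    rw [Real.norm_eq_abs, abs_le]
    exact ⟨by linarith [hω.1, hM.le], hω.2⟩
  have hRint : ∀ i, Integrable (R i) μ := fun i => (hR2 i).integrable one_le_two
  have hF2 : MemLp F 2 μ := by
    refine (memLp_top_of_bound hFmeas.aestronglyMeasurable (d * M) ?_).mono_exponent le_top
    filter_upwards [hFbd] with ω hω
    rw [Real.norm_eq_abs, abs_le]
    exact ⟨by linarith [hω.1, hω.2], hω.2⟩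
  have hFint : Integrable F μ := hF2.integrable one_le_two
  set u : ℝ := ∫ ω, F ω ∂μ with hudef
  have hu_sum : u = ∫ ω, ∑ i, R i ω ∂μ := by rw [hudef]; exact integral_congr_ae (ae_of_all _ hFapp)
  have hcu : c * M ≤ u := by rw [hu_sum]; exact hE
  have hu0 : 0 < u := lt_of_lt_of_le (mul_pos hc hM) hcu
  set t : ℝ := c ^ 2 / 100 * M with htdef
  have ht0 : 0 < t := by positivity
  set A : Set Ω := {ω | c ^ 2 / 100 * M ≤ ∑ i, R i ω} with hAdef
  have hA : MeasurableSet A := by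
    have : A = {ω | t ≤ F ω} := by
      ext ω; simp [hAdef, htdef, hFapp]
    rw [this]
    exact measurableSet_le measurable_const hFmeas
  set p : ℝ := (μ A).toReal with hpdef
  have hp0 : 0 ≤ p := ENNReal.toReal_nonneg
  -- second moment bound
  set x : ℝ := ∫ ω, F ω ^ 2 ∂μ with hxdef
  have hx0 : 0 ≤ x := integral_nonneg fun ω => sq_nonneg _
  have hvar_le : ∀ i, ProbabilityTheory.variance (R i) μ ≤ M * ∫ ω, R i ω ∂μ := by
    intro i
    refine le_trans (ProbabilityTheory.variance_le_expectation_sq (hmeas i).aestronglyMeasurable) ?_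
    have h1 : ∫ ω, (R i ^ 2) ω ∂μ ≤ ∫ ω, M * R i ω ∂μ := by
      refine integral_mono_ae (hR2 i).integrable_sq ((hRint i).const_mul M) ?_
      filter_upwards [hbdd i] with ω hω
      simp only [Pi.pow_apply]
      nlinarith [hω.1, hω.2]
    calc ∫ ω, (R i ^ 2) ω ∂μ ≤ ∫ ω, M * R i ω ∂μ := h1
      _ = M * ∫ ω, R i ω ∂μ := integral_const_mul M _
  have hvsum : ProbabilityTheory.variance F μ = ∑ i, ProbabilityTheory.variance (R i) μ := by
    rw [hFdef]
    exact ProbabilityTheory.IndepFun.variance_sum (fun i _ => hR2 i)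
      (fun i _ j _ hij => hindep.indepFun hij)
  have hx_le : x ≤ M * u + u ^ 2 := by
    have hdef' : ProbabilityTheory.variance F μ = x - u ^ 2 := by
      rw [ProbabilityTheory.variance_eq_sub hF2, hxdef, hudef]
      congr 1
    have hsum_int : u = ∑ i, ∫ ω, R i ω ∂μ := by
      rw [hu_sum]; exact integral_finset_sum _ fun i _ => hRint i
    have h2 : ∑ i, ProbabilityTheory.variance (R i) μ ≤ M * u := by
      rw [hsum_int, Finset.mul_sum]
      exact Finset.sum_le_sum fun i _ => hvar_le i
    nlinarith [hvsum, hdef', h2]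
  -- Paley-Zygmund step: (u - t)^2 ≤ x * p
  have hut : t ≤ u / 100 := by nlinarith
  have hkey : (u - t) ^ 2 ≤ x * p := by
    have hIeq : ∫ ω in A, F ω ∂μ + ∫ ω in Aᶜ, F ω ∂μ = u := integral_add_compl hA hFint
    have hcompl : ∫ ω in Aᶜ, F ω ∂μ ≤ t := by
      have h1 : ∫ ω in Aᶜ, F ω ∂μ ≤ ∫ _ω in Aᶜ, t ∂μ := by
        refine setIntegral_mono_on hFint.integrableOn (integrable_const t).integrableOn
          hA.compl ?_
        intro ω hω
        rw [hFapp]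
        exact le_of_not_ge hω
      have h2 : ∫ _ω in Aᶜ, t ∂μ = (μ Aᶜ).toReal * t := by
        rw [setIntegral_const, smul_eq_mul, Measure.real]
      have h3 : (μ Aᶜ).toReal ≤ 1 := by
        rw [← ENNReal.toReal_one]
        exact ENNReal.toReal_mono ENNReal.one_ne_top (prob_le_one)
      nlinarith
    have hIlb : u - t ≤ ∫ ω in A, F ω ∂μ := by linarith
    -- Cauchy-Schwarz
    have hg2 : MemLp (A.indicator fun _ => (1 : ℝ)) (ENNReal.ofReal 2) μ :=
      memLp_indicator_const _ hA 1 (Or.inr (measure_ne_top μ A))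
    have hF2' : MemLp F (ENNReal.ofReal 2) μ := by
      have : ENNReal.ofReal 2 = 2 := by norm_num
      rw [this]; exact hF2
    have hCS := integral_mul_le_Lp_mul_Lq_of_nonneg Real.HolderConjugate.two_two
      (μ := μ) (f := F) (g := A.indicator fun _ => (1 : ℝ))
      (by filter_upwards [hFbd] with ω hω using hω.1)
      (ae_of_all _ fun ω => Set.indicator_nonneg (fun _ _ => zero_le_one) ω)
      hF2' hg2
    have hprod : ∫ ω, F ω * (A.indicator fun _ => (1 : ℝ)) ω ∂μ = ∫ ω in A, F ω ∂μ := by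
      rw [← integral_indicator hA]
      congr 1
      funext ω
      by_cases hω : ω ∈ A <;> simp [Set.indicator, hω]
    have hFsq : ∫ ω, F ω ^ (2 : ℝ) ∂μ = x := by
      rw [hxdef]
      congr 1; funext ω
      rw [show (2 : ℝ) = ((2 : ℕ) : ℝ) by norm_num, Real.rpow_natCast]
    have hgsq : ∫ ω, ((A.indicator fun _ => (1 : ℝ)) ω) ^ (2 : ℝ) ∂μ = p := by
      have : ∀ ω, ((A.indicator fun _ => (1 : ℝ)) ω) ^ (2 : ℝ)
          = (A.indicator fun _ => (1 : ℝ)) ω := by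
        intro ω
        by_cases hω : ω ∈ A <;> simp [Set.indicator, hω, Real.rpow_natCast]
      rw [integral_congr_ae (ae_of_all _ this), integral_indicator_const (1 : ℝ) hA,
        smul_eq_mul, mul_one, Measure.real, hpdef]
    rw [hprod, hFsq, hgsq] at hCS
    have hle : u - t ≤ x ^ (1 / 2 : ℝ) * p ^ (1 / 2 : ℝ) := le_trans hIlb hCS
    have hsq : (x ^ (1 / 2 : ℝ) * p ^ (1 / 2 : ℝ)) ^ 2 = x * p := by
      rw [mul_pow, ← Real.rpow_natCast (x ^ (1 / 2 : ℝ)) 2,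
        ← Real.rpow_natCast (p ^ (1 / 2 : ℝ)) 2, ← Real.rpow_mul hx0, ← Real.rpow_mul hp0]
      norm_num
    calc (u - t) ^ 2 ≤ (x ^ (1 / 2 : ℝ) * p ^ (1 / 2 : ℝ)) ^ 2 := by
          apply pow_le_pow_left₀ (by linarith) hle 2
      _ = x * p := hsq
  have hp' : (u - t) ^ 2 ≤ (M * u + u ^ 2) * p :=
    le_trans hkey (mul_le_mul_of_nonneg_right hx_le hp0)
  exact anticoncentration_endgame M c u t p hM hc hc' hcu hu0 htdef hp0 hp'
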